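/- arXiv:math/0110144 — 6 statements merged into one kernel-verified Lean document; each statement's English description precedes it below -/
import Mathlib

section
/- Let F : ℝⁿ → ℝⁿ be a homogeneous polynomial map of degree d ≥ 1 such that F(x) is proportional to x for every x. Then F(x) = G(x) • x for some homogeneous polynomial G of degree d − 1. -/
open MvPolynomial

private lemma X_dvd_of_support {σ : Type*} [DecidableEq σ] {p : MvPolynomial σ ℝ} {i : σ}
    (h : ∀ m ∈ p.support, m i ≠ 0) : X i ∣ p := by
  rw [p.as_sum]
  refine Finset.dvd_sum fun m hm => ?_
  rw [X_dvd_monomial]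
  exact Or.inr (h m hm)

private lemma hom_of_X_mul {σ : Type*} [DecidableEq σ] {q : MvPolynomial σ ℝ} {i : σ} {d : ℕ}
    (hd : 1 ≤ d) (h : (X i * q).IsHomogeneous d) : q.IsHomogeneous (d - 1) := by
  intro m hm
  have h1 : MvPolynomial.coeff (Finsupp.single i 1 + m) (X i * q) = MvPolynomial.coeff m q :=
    coeff_X_mul m i q
  have h2 : (Finsupp.weight 1) (Finsupp.single i 1 + m) = d := h (by rw [h1]; exact hm)
  have h3 : (Finsupp.weight 1) (Finsupp.single i 1 + m) =
      1 + (Finsupp.weight 1) m := by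
    rw [map_add]
    simp [Finsupp.weight_apply, Finsupp.sum_single_index]
  rw [h3] at h2
  omega

/-- A homogeneous polynomial map `F : ℝⁿ → ℝⁿ` of degree `d ≥ 1` such that `F x`
is proportional to `x` everywhere equals `G x • x` for a homogeneous polynomial `G`
of degree `d - 1`. -/
theorem stmt1 {n : ℕ} (d : ℕ) (hd : 1 ≤ d) (P : Fin n → MvPolynomial (Fin n) ℝ)
    (hhom : ∀ i, (P i).IsHomogeneous d)
    (hprop : ∀ (x : Fin n → ℝ) (i j : Fin n),
      x i * MvPolynomial.eval x (P j) = x j * MvPolynomial.eval x (P i)) :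
    ∃ G : MvPolynomial (Fin n) ℝ, G.IsHomogeneous (d - 1) ∧
      ∀ (x : Fin n → ℝ) (i : Fin n),
        MvPolynomial.eval x (P i) = MvPolynomial.eval x G * x i := by
  classical
  rcases Nat.eq_zero_or_pos n with hn0 | hn0
  · refine ⟨0, isHomogeneous_zero _ _ _, fun x i => ?_⟩
    exact absurd i.2 (by omega)
  -- polynomial identity
  have key : ∀ i j : Fin n, (X i : MvPolynomial (Fin n) ℝ) * P j = X j * P i := by
    intro i j
    apply MvPolynomial.funext
    intro x
    simpa using hprop x i j
  -- every monomial of `P i` contains `X i`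
  have hsupp : ∀ i : Fin n, ∀ m ∈ (P i).support, m i ≠ 0 := by
    intro i m hm hmi
    rw [MvPolynomial.mem_support_iff] at hm
    rcases lt_or_ge n 2 with h2 | h2
    · -- n = 1 : use homogeneity
      have hmz : m = 0 := by
        ext j
        have : j = i := Fin.ext (by omega)
        rw [this, hmi]; rfl
      have := hhom i hm
      rw [hmz] at this
      simp at this
      omega
    · -- n ≥ 2 : pick j ≠ i and compare coefficients
      set j : Fin n := if h : i.val = 0 then ⟨1, by omega⟩ else ⟨0, by omega⟩ with hj
      have hij : j ≠ i := by
        rcases Nat.eq_zero_or_pos i.val with h | h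
        · simp only [hj, h, dif_pos]
          intro hc; exact absurd (congrArg Fin.val hc) (by simp [h])
        · simp only [hj, Nat.pos_iff_ne_zero.mp h, dif_neg, not_false_iff]
          intro hc; exact absurd (congrArg Fin.val hc) (by simp; omega)
      have hcoeff := congrArg (MvPolynomial.coeff (Finsupp.single j 1 + m)) (key i j)
      rw [coeff_X_mul] at hcoeff
      rw [coeff_X_mul'] at hcoeff
      have hnotmem : i ∉ (Finsupp.single j 1 + m).support := by
        simp [Finsupp.single_apply, hij, hmi]
      rw [if_neg hnotmem] at hcoeff
      exact hm hcoeff.symm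
  have hdvd : ∀ i : Fin n, (X i : MvPolynomial (Fin n) ℝ) ∣ P i :=
    fun i => X_dvd_of_support (hsupp i)
  choose Q hQ using hdvd
  -- all quotients agree
  have hQeq : ∀ i j : Fin n, Q i = Q j := by
    intro i j
    have h1 : (X i : MvPolynomial (Fin n) ℝ) * X j * Q j = X i * X j * Q i := by
      have := key i j
      rw [hQ i, hQ j] at this
      ring_nf at this ⊢
      linear_combination this
    have hne : (X i : MvPolynomial (Fin n) ℝ) * X j ≠ 0 :=
      mul_ne_zero (X_ne_zero i) (X_ne_zero j)
    exact (mul_left_cancel₀ hne h1).symm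
  set i0 : Fin n := ⟨0, hn0⟩
  refine ⟨Q i0, ?_, ?_⟩
  · apply hom_of_X_mul hd
    rw [← hQ i0]
    exact hhom i0
  · intro x i
    rw [hQeq i0 i, hQ i]
    simp [mul_comm, mul_left_comm]
end

section
/- Let Λ : ℝⁿ → Λ²ℝⁿ be a linear map satisfying Λ(x) ∧ x = 0 for all x ∈ ℝⁿ (n ≥ 1). Then there exists a vector b ∈ ℝⁿ such that Λ(x) = b ∧ x for all x. -/
open ExteriorAlgebra

namespace Stmt2Aux

noncomputable section

variable {n : ℕ}

abbrev EA (n : ℕ) := ExteriorAlgebra ℝ (Fin n → ℝ)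

def dd (a : Fin n) : EA n →ₗ[ℝ] EA n :=
  CliffordAlgebra.contractLeft (LinearMap.proj a)

def ll (a b : Fin n) (ω : EA n) : ℝ := algebraMapInv (dd a (dd b ω))

def ee (c : Fin n) : Fin n → ℝ := Pi.single c 1

lemma dd_ι (a : Fin n) (u : Fin n → ℝ) :
    dd a (ι ℝ u) = algebraMap ℝ (EA n) (u a) := by
  unfold dd
  exact CliffordAlgebra.contractLeft_ι _ _ _

lemma dd_ι_mul (a : Fin n) (u : Fin n → ℝ) (x : EA n) :
    dd a (ι ℝ u * x) = u a • x - ι ℝ u * dd a x := by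
  unfold dd
  exact CliffordAlgebra.contractLeft_ι_mul _ _ _

lemma ι_mul_algebraMap (u : Fin n → ℝ) (r : ℝ) :
    ι ℝ u * algebraMap ℝ (EA n) r = r • ι ℝ u := by
  rw [← Algebra.commutes, ← Algebra.smul_def]

lemma gen2 (a b : Fin n) (u v : Fin n → ℝ) :
    dd a (dd b (ι ℝ u * ι ℝ v)) = algebraMap ℝ (EA n) (u b * v a - v b * u a) := by
  rw [dd_ι_mul, dd_ι, ι_mul_algebraMap, map_sub, map_smul, map_smul, dd_ι, dd_ι,
    map_sub, map_mul, map_mul, Algebra.smul_def, Algebra.smul_def]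

lemma ll_add (a b : Fin n) (ω₁ ω₂ : EA n) :
    ll a b (ω₁ + ω₂) = ll a b ω₁ + ll a b ω₂ := by
  simp [ll, map_add]

lemma ll_antisymm (a b : Fin n) (ω : EA n) : ll a b ω = -ll b a ω := by
  unfold ll dd
  rw [CliffordAlgebra.contractLeft_comm, map_neg]

lemma ll_self (a : Fin n) (ω : EA n) : ll a a ω = 0 := by
  have := ll_antisymm a a ω; linarith

lemma ll_gen (a b : Fin n) (u v : Fin n → ℝ) :
    ll a b (ι ℝ u * ι ℝ v) = u b * v a - v b * u a := by
  unfold ll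
  rw [gen2]
  exact algebraMap_leftInverse _ _

lemma mem2 (u v : Fin n → ℝ) :
    ι ℝ u * ι ℝ v ∈
      (LinearMap.range (ι ℝ : (Fin n → ℝ) →ₗ[ℝ] EA n)) ^ 2 := by
  rw [pow_two]
  exact Submodule.mul_mem_mul (LinearMap.mem_range_self _ u) (LinearMap.mem_range_self _ v)

lemma sq_induction {C : EA n → Prop} {ω : EA n}
    (hω : ω ∈ (LinearMap.range (ι ℝ : (Fin n → ℝ) →ₗ[ℝ] EA n)) ^ 2)
    (hgen : ∀ u v : Fin n → ℝ, C (ι ℝ u * ι ℝ v))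
    (hadd : ∀ x y, C x → C y → C (x + y)) : C ω := by
  rw [pow_two] at hω
  refine Submodule.mul_induction_on hω ?_ hadd
  rintro m ⟨u, rfl⟩ m' ⟨v, rfl⟩
  exact hgen u v

lemma lemB (a b : Fin n) {ω : EA n}
    (hω : ω ∈ (LinearMap.range (ι ℝ : (Fin n → ℝ) →ₗ[ℝ] EA n)) ^ 2) :
    dd a (dd b ω) = algebraMap ℝ (EA n) (ll a b ω) := by
  refine sq_induction
    (C := fun ω => dd a (dd b ω) = algebraMap ℝ (EA n) (ll a b ω)) hω
    (fun u v => ?_) (fun x y hx hy => ?_)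
  · rw [gen2, ll_gen]
  · rw [map_add, map_add, hx, hy, ll_add, map_add]

lemma gen3 (a b c : Fin n) (u v x : Fin n → ℝ) :
    dd a (dd b (dd c (ι ℝ u * ι ℝ v * ι ℝ x))) =
      algebraMap ℝ (EA n)
        ((u c * v b - v c * u b) * x a - (u c * v a - v c * u a) * x b
          + (u b * v a - v b * u a) * x c) := by
  have step1 : dd c (ι ℝ u * ι ℝ v * ι ℝ x)
      = u c • (ι ℝ v * ι ℝ x) - v c • (ι ℝ u * ι ℝ x) + x c • (ι ℝ u * ι ℝ v) := by
    rw [mul_assoc, dd_ι_mul, dd_ι_mul, dd_ι, ι_mul_algebraMap, mul_sub,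
      mul_smul_comm, mul_smul_comm]
    abel
  rw [step1]
  simp only [map_add, map_sub, map_smul]
  rw [gen2, gen2, gen2]
  simp only [Algebra.algebraMap_eq_smul_one, smul_smul]
  module


lemma lemA (a b c : Fin n) (x : Fin n → ℝ) {ω : EA n}
    (hω : ω ∈ (LinearMap.range (ι ℝ : (Fin n → ℝ) →ₗ[ℝ] EA n)) ^ 2) :
    dd a (dd b (dd c (ω * ι ℝ x))) =
      algebraMap ℝ (EA n) (ll b c ω * x a - ll a c ω * x b + ll a b ω * x c) := by
  refine sq_induction
    (C := fun ω => dd a (dd b (dd c (ω * ι ℝ x))) =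
      algebraMap ℝ (EA n) (ll b c ω * x a - ll a c ω * x b + ll a b ω * x c)) hω
    (fun u v => ?_) (fun y z hy hz => ?_)
  · rw [gen3, ll_gen, ll_gen, ll_gen]
  · rw [add_mul, map_add, map_add, map_add, hy, hz, ll_add, ll_add, ll_add, ← map_add]
    exact congrArg _ (by ring)

lemma ι_eq_sum (u : Fin n → ℝ) : ι ℝ u = ∑ a, u a • ι ℝ (ee a) := by
  have h : u = ∑ a, u a • ee a := by
    ext j
    simp [ee, Finset.sum_apply, Pi.single_apply]
  conv_lhs => rw [h]
  simp only [map_sum, map_smul]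

lemma expand (u v : Fin n → ℝ) :
    ι ℝ u * ι ℝ v = ∑ a, ∑ b, (u a * v b) • (ι ℝ (ee a) * ι ℝ (ee b)) := by
  rw [ι_eq_sum u, ι_eq_sum v, Finset.sum_mul]
  refine Finset.sum_congr rfl fun a _ => ?_
  rw [smul_mul_assoc, Finset.mul_sum, Finset.smul_sum]
  refine Finset.sum_congr rfl fun b _ => ?_
  rw [mul_smul_comm, smul_smul]

lemma expand' (u v : Fin n → ℝ) :
    ∑ a, ∑ b, (u b * v a) • (ι ℝ (ee a) * ι ℝ (ee b)) = ι ℝ v * ι ℝ u := by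
  rw [expand v u]
  exact Finset.sum_congr rfl fun a _ => Finset.sum_congr rfl fun b _ => by rw [mul_comm]

lemma swap (u v : Fin n → ℝ) : ι ℝ v * ι ℝ u = -(ι ℝ u * ι ℝ v) :=
  eq_neg_of_add_eq_zero_right (ι_add_mul_swap u v)

lemma lemD {ω : EA n}
    (hω : ω ∈ (LinearMap.range (ι ℝ : (Fin n → ℝ) →ₗ[ℝ] EA n)) ^ 2) :
    (2 : ℝ) • ω = -∑ a, ∑ b, ll a b ω • (ι ℝ (ee a) * ι ℝ (ee b)) := by
  refine sq_induction
    (C := fun ω => (2 : ℝ) • ω = -∑ a, ∑ b, ll a b ω • (ι ℝ (ee a) * ι ℝ (ee b))) hω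
    (fun u v => ?_) (fun y z hy hz => ?_)
  · simp only [ll_gen, sub_smul, Finset.sum_sub_distrib]
    rw [expand' u v, expand' v u, swap u v]
    module
  · simp only [ll_add, add_smul, Finset.sum_add_distrib, smul_add]
    rw [hy, hz]
    abel

end

end Stmt2Aux

open Stmt2Aux

/-- If a linear map `Λ : ℝⁿ → Λ²ℝⁿ` satisfies `Λ x ∧ x = 0` for all `x`, then
`Λ x = b ∧ x` for some fixed vector `b`. The second exterior power is realized as
the degree-2 component of the exterior algebra, and the wedge product is the
exterior algebra multiplication. -/
theorem stmt2 {n : ℕ} (hn : 1 ≤ n)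
    (Λ : (Fin n → ℝ) →ₗ[ℝ] ExteriorAlgebra ℝ (Fin n → ℝ))
    (hgrade : ∀ x, Λ x ∈ (LinearMap.range (ι ℝ : (Fin n → ℝ) →ₗ[ℝ] ExteriorAlgebra ℝ (Fin n → ℝ))) ^ 2)
    (hwedge : ∀ x, Λ x * ι ℝ x = 0) :
    ∃ b : Fin n → ℝ, ∀ x, Λ x = ι ℝ b * ι ℝ x := by
  classical
  have P3 : ∀ (a b c : Fin n) (x : Fin n → ℝ),
      ll b c (Λ x) * x a - ll a c (Λ x) * x b + ll a b (Λ x) * x c = 0 := by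
    intro a b c x
    have h := lemA a b c x (hgrade x)
    rw [hwedge x] at h
    simp only [map_zero] at h
    exact (algebraMap_eq_zero_iff _ _).mp h.symm
  have K1 : ∀ a b c : Fin n, a ≠ c → b ≠ c → ll a b (Λ (ee c)) = 0 := by
    intro a b c hac hbc
    have h := P3 a b c (ee c)
    simp only [ee, Pi.single_apply, if_neg hac, if_neg hbc, if_pos rfl, if_true,
      eq_self_iff_true, mul_zero, mul_one, sub_zero, zero_add, zero_sub, neg_zero] at h
    simpa [ee] using h
  have K2 : ∀ a b c : Fin n, a ≠ b → a ≠ c → b ≠ c →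
      ll a b (Λ (ee b)) = ll a c (Λ (ee c)) := by
    intro a b c hab hac hbc
    have h := P3 a b c (ee b + ee c)
    rw [map_add] at h
    simp only [ll_add] at h
    have e1 : (ee b + ee c) a = 0 := by
      simp [ee, Pi.single_apply, hab, hac]
    have e2 : (ee b + ee c) b = 1 := by
      simp [ee, Pi.single_apply, Ne.symm hbc]
    have e3 : (ee b + ee c) c = 1 := by
      simp [ee, Pi.single_apply, hbc]
    rw [e1, e2, e3] at h
    have z1 : ll a c (Λ (ee b)) = 0 := K1 a c b hab (Ne.symm hbc)
    have z2 : ll a b (Λ (ee c)) = 0 := K1 a b c hac hbc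
    linarith
  obtain ⟨bb, hbb⟩ : ∃ bb : Fin n → ℝ, ∀ a b c : Fin n,
      ll a b (Λ (ee c)) = bb b * ee c a - ee c b * bb a := by
    by_cases h2 : 2 ≤ n
    · have hlt0 : 0 < n := by omega
      have hlt1 : 1 < n := by omega
      set i0 : Fin n := ⟨0, hlt0⟩
      set i1 : Fin n := ⟨1, hlt1⟩
      have h01 : i1 ≠ i0 := by simp [i0, i1, Fin.ext_iff]
      set σ : Fin n → Fin n := fun a => if a = i0 then i1 else i0 with hσdef
      have hσ : ∀ a, σ a ≠ a := by
        intro a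
        by_cases h : a = i0
        · simp [σ, h, h01]
        · simp [σ, h, Ne.symm h]
      have hKe : ∀ a b, a ≠ b → ll a b (Λ (ee b)) = ll a (σ a) (Λ (ee (σ a))) := by
        intro a b hab
        by_cases hb : b = σ a
        · rw [hb]
        · exact K2 a b (σ a) hab (Ne.symm (hσ a)) hb
      refine ⟨fun a => -ll a (σ a) (Λ (ee (σ a))), ?_⟩
      intro a b c
      dsimp only
      by_cases hab : a = b
      · subst hab
        rw [ll_self]
        ring
      · by_cases hcb : c = b
        · subst hcb
          rw [hKe a c hab]
          simp [ee, Pi.single_apply, hab]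
        · by_cases hca : c = a
          · subst hca
            rw [ll_antisymm, hKe b c (Ne.symm hab)]
            simp [ee, Pi.single_apply, Ne.symm hab]
          · rw [K1 a b c (Ne.symm hca) (Ne.symm hcb)]
            simp [ee, Pi.single_apply, hca, hcb]
    · have hn1 : n = 1 := by omega
      refine ⟨0, ?_⟩
      intro a b c
      have hab : a = b := by
        apply Fin.ext
        have := a.2
        have := b.2
        omega
      subst hab
      rw [ll_self]
      simp
  refine ⟨bb, ?_⟩
  have key : ∀ c, Λ (ee c) = ι ℝ bb * ι ℝ (ee c) := by
    intro c
    have h1 := lemD (hgrade (ee c))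
    have h2 := lemD (mem2 bb (ee c))
    have hll : ∀ a b : Fin n, ll a b (Λ (ee c)) = ll a b (ι ℝ bb * ι ℝ (ee c)) := by
      intro a b
      rw [hbb, ll_gen]
    simp only [hll] at h1
    have h3 := h1.trans h2.symm
    exact smul_right_injective (EA n) two_ne_zero h3
  have hmaps : Λ = (LinearMap.mulLeft ℝ (ι ℝ bb)).comp (ι ℝ) := by
    apply (Pi.basisFun ℝ (Fin n)).ext
    intro c
    rw [Pi.basisFun_apply]
    have := key c
    simpa [ee, LinearMap.mulLeft_apply] using this
  intro x
  rw [hmaps]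
  simp [LinearMap.mulLeft_apply]
end

section
/- Let Γ : ℝⁿ → ℝⁿ be a vector-valued quadratic form (each coordinate is a homogeneous polynomial of degree 2) whose complexification satisfies: Γ(x) is parallel to x (i.e., Γ(x) ∧ x = 0) for every x in the asymptotic cone C = {x ∈ ℂⁿ : (x,x) = 0}, where (·,·) denotes the ℂ-bilinear extension of the standard inner product. Then there exist a vector b ∈ ℝⁿ and a linear functional λ : ℝⁿ → ℝ such that Γ(x) = (x,x)·b + λ(x)·x for all x. -/
open MvPolynomial Finsupp

set_option linter.unusedSectionVars false

section
variable {σ : Type*} [DecidableEq σ]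

lemma deg_single (j : σ) (a : ℕ) : Finsupp.degree (Finsupp.single j a) = a := by
  rw [Finsupp.degree_eq_weight_one]
  rw [Finsupp.weight_apply, Finsupp.sum_single_index] <;> simp

lemma pair_eq_pair_iff {j k j' k' : σ} :
    Finsupp.single j' 1 + Finsupp.single k' 1 = Finsupp.single j 1 + Finsupp.single k 1 ↔
    (j' = j ∧ k' = k) ∨ (j' = k ∧ k' = j) := by
  constructor
  · intro h
    have happ := DFunLike.congr_fun h j'
    simp only [Finsupp.add_apply, Finsupp.single_apply, if_pos rfl] at happ
    have hj' : j' = j ∨ j' = k := by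
      by_contra hc
      push_neg at hc
      rw [if_neg (fun hh : j = j' => hc.1 hh.symm), if_neg (fun hh : k = j' => hc.2 hh.symm)]
        at happ
      split_ifs at happ <;> omega
    rcases hj' with rfl | rfl
    · left
      refine ⟨rfl, ?_⟩
      have := add_left_cancel h
      rcases (Finsupp.single_eq_single_iff _ _ _ _).mp this with ⟨h1, _⟩ | ⟨_, h1⟩
      · exact h1
      · omega
    · right
      refine ⟨rfl, ?_⟩
      rw [add_comm (Finsupp.single j 1)] at h
      have := add_left_cancel h
      rcases (Finsupp.single_eq_single_iff _ _ _ _).mp this with ⟨h1, _⟩ | ⟨_, h1⟩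
      · exact h1
      · omega
  · rintro (⟨rfl, rfl⟩ | ⟨rfl, rfl⟩)
    · rfl
    · exact add_comm _ _
lemma sum_pair_le_degree (d : σ →₀ ℕ) {j k : σ} (h : j ≠ k) :
    d j + d k ≤ Finsupp.degree d := by
  classical
  have hsub : ({j, k} : Finset σ) ⊆ d.support ∪ {j, k} := Finset.subset_union_right
  have h1 : ∑ i ∈ ({j, k} : Finset σ), d i ≤ ∑ i ∈ d.support ∪ {j, k}, d i :=
    Finset.sum_le_sum_of_subset hsub
  have h2 : ∑ i ∈ d.support ∪ {j, k}, d i = Finsupp.degree d := by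
    rw [Finsupp.degree]
    symm
    apply Finset.sum_subset Finset.subset_union_left
    intro i _ hi
    exact Finsupp.notMem_support_iff.mp hi
  rw [Finset.sum_pair h] at h1
  omega

lemma triple_le_degree (d : σ →₀ ℕ) {j k l : σ} (h1 : j ≠ k) (h2 : j ≠ l) (h3 : k ≠ l) :
    d j + d k + d l ≤ Finsupp.degree d := by
  classical
  have hsub : ({j, k, l} : Finset σ) ⊆ d.support ∪ {j, k, l} := Finset.subset_union_right
  have hs : ∑ i ∈ ({j, k, l} : Finset σ), d i ≤ ∑ i ∈ d.support ∪ {j, k, l}, d i :=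
    Finset.sum_le_sum_of_subset hsub
  have h2' : ∑ i ∈ d.support ∪ {j, k, l}, d i = Finsupp.degree d := by
    rw [Finsupp.degree]
    symm
    apply Finset.sum_subset Finset.subset_union_left
    intro i _ hi
    exact Finsupp.notMem_support_iff.mp hi
  rw [Finset.sum_insert (by simp [h1, h2]), Finset.sum_pair h3] at hs
  omega

lemma deg_two_class (d : σ →₀ ℕ) (h : Finsupp.degree d = 2) :
    ∃ j k, d = Finsupp.single j 1 + Finsupp.single k 1 := by
  have hd0 : d ≠ 0 := by
    intro h0; rw [h0] at h; simp at h
  obtain ⟨j, hj⟩ := Finsupp.ne_iff.mp hd0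
  simp only [Finsupp.coe_zero, Pi.zero_apply] at hj
  have hjd : d j ≤ 2 := h ▸ Finsupp.le_degree j d
  rcases (by omega : d j = 2 ∨ d j = 1) with hj2 | hj1
  · refine ⟨j, j, ?_⟩
    rw [← Finsupp.single_add]
    ext k
    rcases eq_or_ne k j with rfl | hkj
    · simp [hj2]
    · have := sum_pair_le_degree d hkj.symm
      simp only [Finsupp.single_apply, if_neg (fun hh : j = k => hkj hh.symm)]
      omega
  · -- find another index k ≠ j with d k ≥ 1
    have hex : ∃ k, k ≠ j ∧ d k ≠ 0 := by
      by_contra hc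
      push_neg at hc
      have : d = Finsupp.single j 1 := by
        ext k
        rcases eq_or_ne k j with rfl | hkj
        · simp [hj1]
        · simp [Finsupp.single_apply, if_neg (fun hh : j = k => hkj hh.symm), hc k hkj]
      rw [this, deg_single] at h
      omega
    obtain ⟨k, hkj, hk⟩ := hex
    have hpair := sum_pair_le_degree d (Ne.symm hkj)
    refine ⟨j, k, ?_⟩
    ext l
    simp only [Finsupp.coe_add, Pi.add_apply, Finsupp.single_apply]
    rcases eq_or_ne l j with rfl | hlj
    · rw [if_pos rfl, if_neg (fun hh : k = l => hkj hh)]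
      omega
    · rw [if_neg (fun hh : j = l => hlj hh.symm)]
      rcases eq_or_ne l k with rfl | hlk
      · rw [if_pos rfl]; omega
      · rw [if_neg (fun hh : k = l => hlk hh.symm)]
        have := triple_le_degree d (Ne.symm hkj) (fun hh : j = l => hlj hh.symm)
          (fun hh : k = l => hlk hh.symm)
        omega

end

lemma quad_expand {n : ℕ} (Q : MvPolynomial (Fin n) ℝ) (h : Q.IsHomogeneous 2) :
    ∃ m : Fin n → Fin n → ℝ, (∀ j k, m j k = m k j) ∧
      Q = ∑ j, ∑ k, (C (m j k)) * X j * X k := by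
  classical
  set m : Fin n → Fin n → ℝ := fun j k =>
    if j = k then coeff (Finsupp.single j 2) Q
    else coeff (Finsupp.single j 1 + Finsupp.single k 1) Q / 2 with hm
  have hsymm : ∀ j k, m j k = m k j := by
    intro j k
    rcases eq_or_ne j k with rfl | hjk
    · rfl
    · simp only [hm, if_neg hjk, if_neg (Ne.symm hjk), add_comm]
  refine ⟨m, hsymm, ?_⟩
  ext d
  have hrw : ∀ (j k : Fin n), (C (m j k)) * X j * X k
      = monomial (Finsupp.single j 1 + Finsupp.single k 1) (m j k) := by
    intro j k
    have hX : X j * X k = monomial (Finsupp.single j 1 + Finsupp.single k 1) (1:ℝ) := by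
      rw [← pow_one (X j), ← pow_one (X k), X_pow_eq_monomial, X_pow_eq_monomial,
        monomial_mul, one_mul]
    rw [mul_assoc, hX, C_mul_monomial, mul_one]
  have hdegpair : ∀ (j k : Fin n),
      Finsupp.degree (Finsupp.single j 1 + Finsupp.single k 1) = 2 := by
    intro j k
    rw [Finsupp.degree_eq_weight_one, map_add, ← Finsupp.degree_eq_weight_one]
    rw [deg_single, deg_single]
  have inner_diag : ∀ (j j' : Fin n),
      (∑ k', if Finsupp.single j' 1 + Finsupp.single k' 1
          = Finsupp.single j 1 + Finsupp.single j 1 then m j' k' else 0)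
      = if j' = j then m j j else 0 := by
    intro j j'
    by_cases h1 : j' = j
    · subst h1
      rw [if_pos rfl]
      have hcond : ∀ k' : Fin n, (Finsupp.single j' 1 + Finsupp.single k' 1
          = Finsupp.single j' 1 + Finsupp.single j' 1) ↔ k' = j' := by
        intro k'
        constructor
        · intro hh
          rcases pair_eq_pair_iff.mp hh with ⟨_, h2⟩ | ⟨_, h2⟩ <;> exact h2
        · rintro rfl; rfl
      rw [Finset.sum_congr rfl (fun k' _ => if_congr (hcond k') rfl rfl)]
      rw [Finset.sum_ite_eq']
      simp
    · rw [if_neg h1]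
      apply Finset.sum_eq_zero
      intro k' _
      rw [if_neg]
      intro hh
      rcases pair_eq_pair_iff.mp hh with ⟨h2, _⟩ | ⟨h2, _⟩ <;> exact h1 h2
  have inner_off : ∀ (j k : Fin n), j ≠ k → ∀ j' : Fin n,
      (∑ k', if Finsupp.single j' 1 + Finsupp.single k' 1
          = Finsupp.single j 1 + Finsupp.single k 1 then m j' k' else 0)
      = (if j' = j then m j k else 0) + (if j' = k then m k j else 0) := by
    intro j k hjk j'
    by_cases h1 : j' = j
    · subst h1
      rw [if_pos rfl, if_neg hjk, add_zero]
      have hcond : ∀ k' : Fin n, (Finsupp.single j' 1 + Finsupp.single k' 1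
          = Finsupp.single j' 1 + Finsupp.single k 1) ↔ k' = k := by
        intro k'
        constructor
        · intro hh
          rcases pair_eq_pair_iff.mp hh with ⟨_, h2⟩ | ⟨h2, _⟩
          · exact h2
          · exact absurd h2 hjk
        · rintro rfl; rfl
      rw [Finset.sum_congr rfl (fun k' _ => if_congr (hcond k') rfl rfl)]
      rw [Finset.sum_ite_eq']
      simp
    · by_cases h2 : j' = k
      · subst h2
        rw [if_neg h1, if_pos rfl, zero_add]
        have hcond : ∀ k' : Fin n, (Finsupp.single j' 1 + Finsupp.single k' 1
            = Finsupp.single j 1 + Finsupp.single j' 1) ↔ k' = j := by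
          intro k'
          constructor
          · intro hh
            rcases pair_eq_pair_iff.mp hh with ⟨h3, _⟩ | ⟨_, h3⟩
            · exact absurd h3 h1
            · exact h3
          · rintro rfl
            exact add_comm _ _
        rw [Finset.sum_congr rfl (fun k' _ => if_congr (hcond k') rfl rfl)]
        rw [Finset.sum_ite_eq']
        simp
      · rw [if_neg h1, if_neg h2, add_zero]
        apply Finset.sum_eq_zero
        intro k' _
        rw [if_neg]
        intro hh
        rcases pair_eq_pair_iff.mp hh with ⟨h3, _⟩ | ⟨h3, _⟩
        · exact h1 h3
        · exact h2 h3
  simp only [hrw, coeff_sum, coeff_monomial]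
  rcases eq_or_ne (Finsupp.degree d) 2 with hd2 | hd2
  · obtain ⟨j, k, rfl⟩ := deg_two_class d hd2
    rcases eq_or_ne j k with heq | hjk
    · subst heq
      rw [Finset.sum_congr rfl (fun j' _ => inner_diag j j')]
      rw [Finset.sum_ite_eq']
      simp only [Finset.mem_univ, if_true]
      rw [← Finsupp.single_add]
      norm_num [hm]
    · rw [Finset.sum_congr rfl (fun j' _ => inner_off j k hjk j')]
      rw [Finset.sum_add_distrib, Finset.sum_ite_eq', Finset.sum_ite_eq']
      simp only [Finset.mem_univ, if_true]
      have hmv : m j k = coeff (Finsupp.single j 1 + Finsupp.single k 1) Q / 2 := by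
        simp [hm, hjk]
      have hmv2 : m k j = coeff (Finsupp.single j 1 + Finsupp.single k 1) Q / 2 := by
        rw [← hsymm j k, hmv]
      rw [hmv, hmv2]
      ring
  · rw [IsHomogeneous.coeff_eq_zero h hd2]
    symm
    apply Finset.sum_eq_zero
    intro j' _
    apply Finset.sum_eq_zero
    intro k' _
    rw [if_neg]
    intro hc
    exact hd2 (by rw [← hc]; exact hdegpair j' k')

lemma sum_unit {n : ℕ} (c : Fin n → ℂ) (j k : Fin n) (hjk : j ≠ k) :
    ∑ i, c i * (if i = j then 1 else if i = k then Complex.I else 0)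
      = c j + c k * Complex.I := by
  have key : ∀ i, c i * (if i = j then (1:ℂ) else if i = k then Complex.I else 0)
      = (if i = j then c i else 0) + (if i = k then c i * Complex.I else 0) := by
    intro i
    by_cases h1 : i = j
    · subst h1
      rw [if_pos rfl, if_pos rfl, if_neg hjk, mul_one, add_zero]
    · by_cases h2 : i = k <;> simp [h1, h2, Ne.symm hjk]
  rw [Finset.sum_congr rfl (fun i _ => key i), Finset.sum_add_distrib,
    Finset.sum_ite_eq', Finset.sum_ite_eq']
  simp

lemma cone_unit {n : ℕ} (j k : Fin n) (hjk : j ≠ k) :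
    ∑ i, (if i = j then (1:ℂ) else if i = k then Complex.I else 0) ^ 2 = 0 := by
  have key : ∀ i, (if i = j then (1:ℂ) else if i = k then Complex.I else 0) ^ 2
      = (if i = j then (1:ℂ) else 0) + (if i = k then -1 else 0) := by
    intro i
    by_cases h1 : i = j
    · subst h1
      rw [if_pos rfl, if_pos rfl, if_neg hjk, add_zero, one_pow]
    · by_cases h2 : i = k <;> simp [h1, h2, Ne.symm hjk, Complex.I_sq]
  rw [Finset.sum_congr rfl (fun i _ => key i), Finset.sum_add_distrib,
    Finset.sum_ite_eq', Finset.sum_ite_eq']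
  simp

/-- If a vector-valued real quadratic form `Γ` (coordinates `P i`, homogeneous of degree 2)
has complexification parallel to `x` everywhere on the asymptotic cone `{(x,x) = 0} ⊆ ℂⁿ`,
then `Γ x = (x,x)·b + λ(x)·x` for some `b ∈ ℝⁿ` and linear functional `λ`. -/
theorem stmt3 {n : ℕ} (P : Fin n → MvPolynomial (Fin n) ℝ)
    (hdeg : ∀ i, (P i).IsHomogeneous 2)
    (hpar : ∀ x : Fin n → ℂ, (∑ i, x i ^ 2) = 0 →
      ∀ i j, x i * eval x (map (algebraMap ℝ ℂ) (P j))
           = x j * eval x (map (algebraMap ℝ ℂ) (P i))) :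
    ∃ (b : Fin n → ℝ) (lam : (Fin n → ℝ) →ₗ[ℝ] ℝ),
      ∀ (x : Fin n → ℝ) (i : Fin n),
        eval x (P i) = (∑ j, x j ^ 2) * b i + lam x * x i := by
  classical
  have h1 : ∀ i, ∃ m : Fin n → Fin n → ℝ, (∀ j k, m j k = m k j) ∧
      P i = ∑ j, ∑ k, (C (m j k)) * X j * X k := fun i => quad_expand _ (hdeg i)
  choose M hMsymm hMeq using h1
  have evalR : ∀ i (x : Fin n → ℝ), eval x (P i) = ∑ j, ∑ k, M i j k * x j * x k := by
    intro i x
    rw [hMeq i]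
    simp
  have evalC : ∀ i (z : Fin n → ℂ), eval z (map (algebraMap ℝ ℂ) (P i))
      = ∑ j, ∑ k, (M i j k : ℂ) * z j * z k := by
    intro i z
    rw [hMeq i]
    simp
  -- evaluation at the cone points e_j + I e_k
  have hval : ∀ i (j k : Fin n), j ≠ k →
      eval (fun t => if t = j then (1:ℂ) else if t = k then Complex.I else 0)
        (map (algebraMap ℝ ℂ) (P i))
      = ((M i j j - M i k k : ℝ) : ℂ) + ((2 * M i j k : ℝ)) * Complex.I := by
    intro i j k hjk
    rw [evalC]
    have step : ∀ j' : Fin n, (∑ k', (M i j' k' : ℂ)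
          * (if j' = j then (1:ℂ) else if j' = k then Complex.I else 0)
          * (if k' = j then (1:ℂ) else if k' = k then Complex.I else 0))
        = (fun j'' => ((M i j'' j : ℂ) + (M i j'' k : ℂ) * Complex.I)) j'
          * (if j' = j then (1:ℂ) else if j' = k then Complex.I else 0) := by
      intro j'
      have := sum_unit (fun k' => (M i j' k' : ℂ)) j k hjk
      simp only at this ⊢
      rw [← this, Finset.sum_mul]
      apply Finset.sum_congr rfl
      intro k' _
      ring
    rw [Finset.sum_congr rfl (fun j' _ => step j')]
    rw [sum_unit (fun j'' => ((M i j'' j : ℂ) + (M i j'' k : ℂ) * Complex.I)) j k hjk]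
    rw [hMsymm i k j]
    push_cast
    have : Complex.I * Complex.I = -1 := Complex.I_mul_I
    ring_nf
    rw [Complex.I_sq]
    ring
  -- relation R1
  have R1 : ∀ a j k : Fin n, j ≠ k → a ≠ j → a ≠ k →
      M a j j = M a k k ∧ M a j k = 0 := by
    intro a j k hjk haj hak
    have h := hpar (fun t => if t = j then (1:ℂ) else if t = k then Complex.I else 0)
      (cone_unit j k hjk) a j
    rw [if_neg haj, if_neg hak, if_pos rfl, zero_mul, one_mul] at h
    rw [hval a j k hjk] at h
    have h2 : ((M a j j - M a k k : ℝ) : ℂ) + ((2 * M a j k : ℝ)) * Complex.I = 0 := h.symm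
    rw [Complex.ext_iff] at h2
    simp [Complex.add_im, Complex.add_re] at h2
    constructor
    · linarith [h2.1]
    · linarith [h2.2]
  -- relation R2 (second part): 2 * M k j k = M j j j - M j k k
  have R2 : ∀ j k : Fin n, j ≠ k →
      2 * M k j k = M j j j - M j k k := by
    intro j k hjk
    have h := hpar (fun t => if t = j then (1:ℂ) else if t = k then Complex.I else 0)
      (cone_unit j k hjk) j k
    rw [if_pos rfl, if_neg (Ne.symm hjk), if_pos rfl, one_mul] at h
    rw [hval k j k hjk, hval j j k hjk] at h
    have h2 := h
    rw [Complex.ext_iff] at h2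
    simp [Complex.add_im, Complex.add_re, Complex.mul_re, Complex.mul_im] at h2
    linarith [h2.2]
  -- now build b and lam
  by_cases h0 : n = 0
  · subst h0
    exact ⟨0, 0, fun x i => i.elim0⟩
  by_cases h1' : n = 1
  · subst h1'
    refine ⟨fun i => M i i i, 0, ?_⟩
    intro x i
    have huniq : ∀ j : Fin 1, j = i := fun j => Subsingleton.elim j i
    rw [evalR]
    rw [Fintype.sum_eq_single i (fun j hj => absurd (huniq j) hj)]
    rw [Fintype.sum_eq_single i (fun j hj => absurd (huniq j) hj)]
    rw [Fintype.sum_eq_single i (fun j hj => absurd (huniq j) hj)]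
    simp [sq]
    ring
  have hn : 2 ≤ n := by omega
  set z0 : Fin n := ⟨0, by omega⟩ with hz0
  set z1 : Fin n := ⟨1, by omega⟩ with hz1
  have hz01 : z1 ≠ z0 := by
    simp [hz0, hz1, Fin.ext_iff]
  set pick : Fin n → Fin n := fun i => if i = z0 then z1 else z0 with hpickdef
  have hpick : ∀ i, pick i ≠ i := by
    intro i
    by_cases h : i = z0
    · subst h
      simp [hpickdef, hz01]
    · simp [hpickdef, h]
      exact fun hh => h hh.symm
  set b : Fin n → ℝ := fun i => M i (pick i) (pick i) with hbdef
  set lamv : Fin n → ℝ := fun j => M j j j - b j with hlamvdef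
  have hb : ∀ i k, k ≠ i → M i k k = b i := by
    intro i k hk
    by_cases hkp : k = pick i
    · rw [hkp, hbdef]
    · have := (R1 i k (pick i) hkp (Ne.symm hk) (Ne.symm (hpick i))).1
      rw [this, hbdef]
  have hoff : ∀ i j k, j ≠ k → i ≠ j → i ≠ k → M i j k = 0 :=
    fun i j k hh1 hh2 hh3 => (R1 i j k hh1 hh2 hh3).2
  have hmix : ∀ i j, j ≠ i → 2 * M i j i = lamv j := by
    intro i j hji
    have h2 := R2 j i hji
    have h3 : M j i i = b j := hb j i (Ne.symm hji)
    rw [hlamvdef]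
    simp only
    linarith [h2, h3]
  refine ⟨b, ⟨⟨fun x => ∑ j, lamv j * x j, fun x y => ?_⟩, fun c x => ?_⟩, ?_⟩
  · rw [← Finset.sum_add_distrib]
    apply Finset.sum_congr rfl
    intro j _
    simp [mul_add]
  · simp only [Pi.smul_apply, smul_eq_mul, RingHom.id_apply]
    rw [Finset.mul_sum]
    apply Finset.sum_congr rfl
    intro j _
    ring
  intro x i
  rw [evalR]
  simp only [LinearMap.coe_mk, AddHom.coe_mk]
  have hM2 : ∀ j k : Fin n, M i j k * x j * x k
      = b i * (if j = k then x j * x k else 0)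
        + lamv k / 2 * (if j = i then x j * x k else 0)
        + lamv j / 2 * (if k = i then x j * x k else 0) := by
    intro j k
    by_cases hjk : j = k
    · subst hjk
      by_cases hji : j = i
      · subst hji
        rw [if_pos rfl]
        have hjj : M j j j = b j + lamv j := by
          rw [hlamvdef]; simp only; ring
        rw [hjj]
        ring
      · rw [if_pos rfl, if_neg hji]
        rw [hb i j hji]
        ring
    · by_cases hji : j = i
      · subst hji
        rw [if_neg hjk, if_pos rfl, if_neg (Ne.symm hjk)]
        have h3 : 2 * M j k j = lamv k := hmix j k (Ne.symm hjk)
        have h4 : M j j k = lamv k / 2 := by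
          rw [hMsymm j j k]; linear_combination h3 / 2
        rw [h4]
        ring
      · by_cases hki : k = i
        · subst hki
          rw [if_neg hjk, if_pos rfl]
          have h3 : 2 * M k j k = lamv j := hmix k j hjk
          have h4 : M k j k = lamv j / 2 := by linear_combination h3 / 2
          rw [h4]
          ring
        · rw [if_neg hjk, if_neg hji, if_neg hki]
          rw [hoff i j k hjk (Ne.symm hji) (Ne.symm hki)]
          ring
  rw [Finset.sum_congr rfl (fun j _ => Finset.sum_congr rfl (fun k _ => hM2 j k))]
  simp only [Finset.sum_add_distrib]
  have E1 : ∑ j, ∑ k, b i * (if j = k then x j * x k else (0:ℝ)) = (∑ j, x j ^ 2) * b i := by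
    rw [Finset.sum_mul]
    apply Finset.sum_congr rfl
    intro j _
    simp only [mul_ite, mul_zero]
    rw [Finset.sum_ite_eq]
    simp [sq]
    ring
  have E2 : ∑ j, ∑ k, lamv k / 2 * (if j = i then x j * x k else (0:ℝ))
      = (∑ j, lamv j * x j) * x i / 2 := by
    have inner : ∀ j, ∑ k, lamv k / 2 * (if j = i then x j * x k else (0:ℝ))
        = if j = i then ∑ k, lamv k / 2 * (x j * x k) else 0 := by
      intro j
      by_cases hj : j = i <;> simp [hj]
    rw [Finset.sum_congr rfl (fun j _ => inner j), Finset.sum_ite_eq']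
    simp only [Finset.mem_univ, if_true]
    rw [Finset.sum_mul, Finset.sum_div]
    apply Finset.sum_congr rfl
    intro j _
    ring
  have E3 : ∑ j, ∑ k, lamv j / 2 * (if k = i then x j * x k else (0:ℝ))
      = (∑ j, lamv j * x j) * x i / 2 := by
    have inner : ∀ j, ∑ k, lamv j / 2 * (if k = i then x j * x k else (0:ℝ))
        = lamv j / 2 * (x j * x i) := by
      intro j
      simp only [mul_ite, mul_zero]
      rw [Finset.sum_ite_eq']
      simp
    rw [Finset.sum_congr rfl (fun j _ => inner j)]
    rw [Finset.sum_mul, Finset.sum_div]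
    apply Finset.sum_congr rfl
    intro j _
    ring
  rw [E1, E2, E3]
  ring
end

section
/- For a ∈ ℝⁿ nonzero, define T^a(x) = ((a,a)·x + (x,x)·a)/((a,a) + 2(a,x) + (x,x)). Then T^a equals the composition of the inversion with center a and radius |a| with the reflection in the hyperplane orthogonal to a, i.e., T^a(x) = a + (a,a)(R(x) − a)/(R(x) − a, R(x) − a) where R(x) = x − 2((a,x)/(a,a))·a, whenever the denominators are nonzero. -/
open RealInnerProductSpace

/-- The map `T^a(x) = ((a,a)x + (x,x)a)/((a,a) + 2(a,x) + (x,x))` equals the composition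
of the reflection `R(x) = x − 2((a,x)/(a,a))a` in the hyperplane orthogonal to `a` with
the inversion of center `a` and radius `|a|`, wherever the denominators are nonzero. -/
theorem stmt5 {n : ℕ} (a x : EuclideanSpace ℝ (Fin n)) (ha : a ≠ 0)
    (hden : ⟪a, a⟫ + 2 * ⟪a, x⟫ + ⟪x, x⟫ ≠ 0)
    (R : EuclideanSpace ℝ (Fin n)) (hR : R = x - (2 * (⟪a, x⟫ / ⟪a, a⟫)) • a)
    (hden2 : ⟪R - a, R - a⟫ ≠ 0) :
    (⟪a, a⟫ + 2 * ⟪a, x⟫ + ⟪x, x⟫)⁻¹ • (⟪a, a⟫ • x + ⟪x, x⟫ • a)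
      = a + (⟪a, a⟫ / ⟪R - a, R - a⟫) • (R - a) := by
  have hα : ⟪a, a⟫ ≠ 0 := inner_self_ne_zero.mpr ha
  have key : ⟪R - a, R - a⟫ = ⟪a, a⟫ + 2 * ⟪a, x⟫ + ⟪x, x⟫ := by
    subst hR
    simp only [inner_sub_left, inner_sub_right, inner_smul_left, inner_smul_right,
      RCLike.conj_to_real]
    rw [real_inner_comm x a]
    set A : ℝ := ⟪a, a⟫
    set B : ℝ := ⟪a, x⟫
    field_simp
    ring
  rw [key, hR]
  set A : ℝ := ⟪a, a⟫
  set B : ℝ := ⟪a, x⟫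
  set C : ℝ := ⟪x, x⟫
  match_scalars <;> · field_simp; try ring
end

section
/- Let A : ℝ⁴ → ℝ⁴ be a linear operator that is almost orthogonal (a scalar multiple of an orthogonal operator) and almost skew-symmetric (A = c·id + S with S skew-symmetric). Then, identifying ℝ⁴ with ℍ via the standard basis, there exists a quaternion a such that A is either left multiplication by a (A(x) = ax) or right multiplication by a (A(x) = xa). -/
open RealInnerProductSpace Quaternion

/-- A linear operator on `ℝ⁴ ≅ ℍ` that is almost orthogonal (a scalar multiple of an
orthogonal operator) and almost skew-symmetric (`A + Aᵀ` a scalar multiple of the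
identity) is left or right multiplication by some quaternion. -/
theorem stmt12 (A : ℍ[ℝ] →ₗ[ℝ] ℍ[ℝ])
    (halmostOrth : ∃ (r : ℝ) (U : ℍ[ℝ] →ₗ[ℝ] ℍ[ℝ]), (∀ x, ‖U x‖ = ‖x‖) ∧
        ∀ x, A x = r • U x)
    (halmostSkew : ∃ c : ℝ, ∀ x y : ℍ[ℝ], ⟪A x, y⟫ + ⟪x, A y⟫ = 2 * c * ⟪x, y⟫) :
    ∃ a : ℍ[ℝ], (∀ x, A x = a * x) ∨ ∀ x, A x = x * a := by
  obtain ⟨r, U, hU, hAU⟩ := halmostOrth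
  obtain ⟨c0, hskew⟩ := halmostSkew
  have hUi : ∀ x y : ℍ[ℝ], ⟪U x, U y⟫ = ⟪x, y⟫ := by
    intro x y
    rw [real_inner_eq_norm_add_mul_self_sub_norm_mul_self_sub_norm_mul_self_div_two,
      real_inner_eq_norm_add_mul_self_sub_norm_mul_self_sub_norm_mul_self_div_two x y,
      ← map_add, hU, hU, hU]
  have hAin : ∀ x y : ℍ[ℝ], ⟪A x, A y⟫ = r ^ 2 * ⟪x, y⟫ := by
    intro x y
    rw [hAU x, hAU y, real_inner_smul_left, real_inner_smul_right, hUi]; ring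
  clear hAU hU hUi
  set ei : ℍ[ℝ] := ⟨0,1,0,0⟩ with hei
  set ej : ℍ[ℝ] := ⟨0,0,1,0⟩ with hej
  set ek : ℍ[ℝ] := ⟨0,0,0,1⟩ with hek
  -- decomposition of A on the basis
  have hdec : ∀ x : ℍ[ℝ], A x = x.re • A 1 + x.imI • A ei + x.imJ • A ej + x.imK • A ek := by
    intro x
    have hx : x = x.re • (1 : ℍ[ℝ]) + x.imI • ei + x.imJ • ej + x.imK • ek := by
      ext <;> simp <;> simp [hei, hej, hek]
    conv_lhs => rw [hx]
    simp
  -- skew equations on the basis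
  have hs11 := hskew 1 1
  have hs1i := hskew 1 ei
  have hs1j := hskew 1 ej
  have hs1k := hskew 1 ek
  have hsii := hskew ei ei
  have hsij := hskew ei ej
  have hsik := hskew ei ek
  have hsjj := hskew ej ej
  have hsjk := hskew ej ek
  have hskk := hskew ek ek
  simp only [Quaternion.inner_def] at hs11 hs1i hs1j hs1k hsii hsij hsik hsjj hsjk hskk
  simp [Quaternion.inner_def, Quaternion.re_mul] at hs11 hs1i hs1j hs1k hsii hsij hsik hsjj hsjk hskk
  simp [hei, hej, hek] at hs11 hs1i hs1j hs1k hsii hsij hsik hsjj hsjk hskk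
  -- names for base variables
  set p := (A 1).imI with hp
  set q := (A 1).imJ with hq
  set w := (A 1).imK with hw
  set α := (A ei).imJ with hα
  set β := (A ei).imK with hβ
  set γ := (A ej).imK with hγ
  have e1re : (A 1).re = c0 := by linarith
  have eire : (A ei).re = -p := by linarith
  have ejre : (A ej).re = -q := by linarith
  have ekre : (A ek).re = -w := by linarith
  have eii : (A ei).imI = c0 := by linarith
  have ejj : (A ej).imJ = c0 := by linarith
  have ekk : (A ek).imK = c0 := by linarith
  have eji : (A ej).imI = -α := by linarith
  have eki : (A ek).imI = -β := by linarith
  have ekj : (A ek).imJ = -γ := by linarith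
  -- orthogonality equations on the basis
  have hn1 := hAin 1 1
  have hni := hAin ei ei
  have hnj := hAin ej ej
  have hnk := hAin ek ek
  have ho1i := hAin 1 ei
  have ho1j := hAin 1 ej
  have ho1k := hAin 1 ek
  have hoij := hAin ei ej
  have hoik := hAin ei ek
  have hojk := hAin ej ek
  simp only [Quaternion.inner_def] at hn1 hni hnj hnk ho1i ho1j ho1k hoij hoik hojk
  simp [Quaternion.inner_def, Quaternion.re_mul, Quaternion.re_star, Quaternion.imI_star,
    Quaternion.imJ_star, Quaternion.imK_star, e1re, eire, ejre, ekre, eii, ejj, ekk,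
    eji, eki, ekj, ← hp, ← hq, ← hw, ← hα, ← hβ, ← hγ] at hn1 hni hnj hnk ho1i ho1j ho1k hoij hoik hojk
  simp [hei, hej, hek] at hn1 hni hnj hnk ho1i ho1j ho1k hoij hoik hojk
  -- the nine products
  have m11 : (p + γ) * (p - γ) = 0 := by linear_combination (hn1 - hnk + hni - hnj) / 2
  have m22 : (q - β) * (q + β) = 0 := by linear_combination (hn1 - hni + hnj - hnk) / 2
  have m33 : (w + α) * (w - α) = 0 := by linear_combination (hn1 - hni + hnk - hnj) / 2
  have m12 : (p + γ) * (q + β) = 0 := by linear_combination hoij - ho1k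
  have m21 : (q - β) * (p - γ) = 0 := by linear_combination hoij + ho1k
  have m13 : (p + γ) * (w - α) = 0 := by linear_combination hoik + ho1j
  have m31 : (w + α) * (p - γ) = 0 := by linear_combination hoik - ho1j
  have m23 : (q - β) * (w - α) = 0 := by linear_combination hojk - ho1i
  have m32 : (w + α) * (q + β) = 0 := by linear_combination hojk + ho1i
  refine ⟨A 1, ?_⟩
  by_cases hu : p + γ = 0 ∧ q - β = 0 ∧ w + α = 0
  · -- right multiplication
    obtain ⟨hu1, hu2, hu3⟩ := hu
    have cγ : γ = -p := by linarith
    have cβ : β = q := by linarith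
    have cα : α = -w := by linarith
    refine Or.inr fun x => ?_
    rw [hdec x]
    ext <;>
      simp only [Quaternion.re_mul, Quaternion.imI_mul, Quaternion.imJ_mul, Quaternion.imK_mul,
        Quaternion.re_add, Quaternion.imI_add, Quaternion.imJ_add, Quaternion.imK_add,
        Quaternion.re_smul, Quaternion.imI_smul, Quaternion.imJ_smul, Quaternion.imK_smul,
        smul_eq_mul, e1re, eire, ejre, ekre, eii, ejj, ekk, eji, eki, ekj, ← hα, ← hβ, ← hγ, cα, cβ, cγ,
        ← hp, ← hq, ← hw] <;> ring
  · -- left multiplication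
    have hv1 : p - γ = 0 ∧ q + β = 0 ∧ w - α = 0 := by
      rcases not_and_or.mp hu with h | h
      · exact ⟨by rcases mul_eq_zero.mp m11 with h'|h'; exact absurd h' h; exact h',
          by rcases mul_eq_zero.mp m12 with h'|h'; exact absurd h' h; exact h',
          by rcases mul_eq_zero.mp m13 with h'|h'; exact absurd h' h; exact h'⟩
      rcases not_and_or.mp h with h | h
      · exact ⟨by rcases mul_eq_zero.mp m21 with h'|h'; exact absurd h' h; exact h',
          by rcases mul_eq_zero.mp m22 with h'|h'; exact absurd h' h; exact h',
          by rcases mul_eq_zero.mp m23 with h'|h'; exact absurd h' h; exact h'⟩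
      · exact ⟨by rcases mul_eq_zero.mp m31 with h'|h'; exact absurd h' h; exact h',
          by rcases mul_eq_zero.mp m32 with h'|h'; exact absurd h' h; exact h',
          by rcases mul_eq_zero.mp m33 with h'|h'; exact absurd h' h; exact h'⟩
    obtain ⟨hv1, hv2, hv3⟩ := hv1
    have cγ : γ = p := by linarith
    have cβ : β = -q := by linarith
    have cα : α = w := by linarith
    refine Or.inl fun x => ?_
    rw [hdec x]
    ext <;>
      simp only [Quaternion.re_mul, Quaternion.imI_mul, Quaternion.imJ_mul, Quaternion.imK_mul,
        Quaternion.re_add, Quaternion.imI_add, Quaternion.imJ_add, Quaternion.imK_add,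
        Quaternion.re_smul, Quaternion.imI_smul, Quaternion.imJ_smul, Quaternion.imK_smul,
        smul_eq_mul, e1re, eire, ejre, ekre, eii, ejj, ekk, eji, eki, ekj, ← hα, ← hβ, ← hγ, cα, cβ, cγ,
        ← hp, ← hq, ← hw] <;> ring
end

section
/- Let A : ℝ⁴ → ℝ⁴ be linear, identify ℝ⁴ with ℍ, and suppose the circle (or line) S_x through 0 with unit tangent direction x/|x| has acceleration vector at 0 (with respect to arc length) equal to w(x) = 2(Φ₂(x) − ((Φ₂(x),x)/(x,x))x)/(x,x) where Φ₂(x) = A(x)·x. If Im A(x) ≠ 0 (where Im and Re are taken pointwise: A(x) = Re A(x) + Im A(x) with Re A(x) ∈ ℝ·1), then the center of S_x, namely w(x)/(w(x),w(x)), equals −½ (Im A(x))⁻¹ · x (quaternionic inverse and product). -/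
open RealInnerProductSpace Quaternion

/-- Let `A : ℝ⁴ → ℝ⁴` be linear, `ℝ⁴ ≅ ℍ`, `Φ₂(x) = A(x)·x`, and let
`w(x) = 2(Φ₂(x) − ((Φ₂(x),x)/(x,x))x)/(x,x)` be the acceleration at `0` of the circle
through `0` with tangent direction `x`. If `Im A(x) ≠ 0`, then the center of this
circle, `w/(w,w)`, equals `−½ (Im A(x))⁻¹ · x` (quaternionic inverse and product). -/
theorem stmt19 (A : ℍ[ℝ] →ₗ[ℝ] ℍ[ℝ]) (x : ℍ[ℝ]) (hx : x ≠ 0)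
    (him : (A x).im ≠ 0) (Φ w : ℍ[ℝ]) (hΦ : Φ = A x * x)
    (hw : w = (2 / ⟪x, x⟫) • (Φ - (⟪Φ, x⟫ / ⟪x, x⟫) • x)) :
    (⟪w, w⟫)⁻¹ • w = -((2 : ℝ)⁻¹ • (((A x).im)⁻¹ * x)) := by
  set a := A x with ha
  have hn : Quaternion.normSq x ≠ 0 := Quaternion.normSq_ne_zero.2 hx
  have hm : Quaternion.normSq a.im ≠ 0 := Quaternion.normSq_ne_zero.2 him
  have hxx : ⟪x, x⟫ = Quaternion.normSq x := Quaternion.inner_self x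
  have hΦx : ⟪Φ, x⟫ = a.re * Quaternion.normSq x := by
    rw [hΦ, Quaternion.inner_def, mul_assoc, Quaternion.self_mul_star,
      Quaternion.mul_coe_eq_smul, Quaternion.re_smul, Quaternion.normSq_def]
    rw [smul_eq_mul]; ring
  have hsub : Φ - (⟪Φ, x⟫ / ⟪x, x⟫) • x = a.im * x := by
    rw [hΦx, hxx, mul_div_assoc, div_self hn, mul_one, hΦ]
    rw [← Quaternion.coe_mul_eq_smul, ← sub_mul]
    congr 1
    rw [sub_eq_iff_eq_add, ← Quaternion.re_add_im a, add_comm]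
    simp
  have hw' : w = (2 / Quaternion.normSq x) • (a.im * x) := by rw [hw, hsub, hxx]
  have hww : ⟪w, w⟫ = (2 / Quaternion.normSq x)^2 * (Quaternion.normSq a.im * Quaternion.normSq x) := by
    rw [hw', real_inner_smul_left, real_inner_smul_right, Quaternion.inner_self, map_mul]
    ring
  have hstar : star a.im = -a.im := by
    rw [Quaternion.star_eq_two_re_sub]
    simp
  have hinv : (a.im)⁻¹ = (Quaternion.normSq a.im)⁻¹ • (-a.im) :=
    (Quaternion.inv_def a.im).trans (by rw [hstar])
  rw [hww, hw', hinv, smul_smul]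
  rw [smul_mul_assoc, neg_mul, smul_neg, smul_neg, neg_neg, smul_smul]
  congr 1
  field_simp
end
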